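/- arXiv:2206.03299 — 3 statements merged into one kernel-verified Lean document; each statement's English description precedes it below -/
import Mathlib

section
/- Let Θ: [0,∞) → ℝ^q solve the gradient flow dΘ/dt = −∇L_n(Θ(t)) for L_n(Θ) = (1/(2n)) Σ_{i=1}^n (f(x_i;Θ) − y_i)², where f is differentiable and satisfies the per-block Euler identity ⟨Θ^(l), ∂f/∂Θ^(l)⟩ = f. Assume |y_i| ≤ C_y for all i. Then for each block l, d/dt ‖Θ^(l)(t)‖₂² ≤ 2√(2L_n(Θ(t))) · (C_y − √(2L_n(Θ(t)))). -/
open scoped RealInnerProductSpace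

noncomputable def singleCLM {ι : Type*} [Fintype ι] [DecidableEq ι] {E : ι → Type*}
    [∀ i, NormedAddCommGroup (E i)] [∀ i, InnerProductSpace ℝ (E i)] (l : ι) :
    E l →L[ℝ] PiLp 2 E :=
  (PiLp.continuousLinearEquiv 2 ℝ E).symm.toContinuousLinearMap.comp
    (ContinuousLinearMap.pi (Pi.single l (ContinuousLinearMap.id ℝ (E l))))

lemma singleCLM_apply {ι : Type*} [Fintype ι] [DecidableEq ι] {E : ι → Type*}
    [∀ i, NormedAddCommGroup (E i)] [∀ i, InnerProductSpace ℝ (E i)] (l m : ι) (v : E l) :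
    singleCLM (E := E) l v m = Pi.single l v m := by
  by_cases h : m = l
  · subst h; simp [singleCLM]
  · simp [singleCLM, Pi.single_eq_of_ne h]

lemma inner_gradient_eq {F : Type*} [NormedAddCommGroup F] [InnerProductSpace ℝ F]
    [CompleteSpace F] (g : F → ℝ) (x w : F) :
    ⟪gradient g x, w⟫ = fderiv ℝ g x w :=
  InnerProductSpace.toDual_symm_apply

lemma hasFDerivAt_update_piLp {ι : Type*} [Fintype ι] [DecidableEq ι] {E : ι → Type*}
    [∀ i, NormedAddCommGroup (E i)] [∀ i, InnerProductSpace ℝ (E i)]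
    (x : PiLp 2 E) (l : ι) :
    HasFDerivAt (F := PiLp 2 E) (fun v => WithLp.toLp 2 (Function.update x l v)) (singleCLM l) (x l) :=
  (PiLp.hasFDerivAt_toLp (𝕜 := ℝ) 2 _).comp (x l) (hasFDerivAt_update x.ofLp (x l))

lemma hasFDerivAt_partial {ι : Type*} [Fintype ι] [DecidableEq ι] {E : ι → Type*}
    [∀ i, NormedAddCommGroup (E i)] [∀ i, InnerProductSpace ℝ (E i)]
    (g : PiLp 2 E → ℝ) (x : PiLp 2 E) (l : ι) (hg : DifferentiableAt ℝ g x) :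
    HasFDerivAt (fun v => g (WithLp.toLp 2 (Function.update x l v)))
      ((fderiv ℝ g x).comp (singleCLM l)) (x l) := by
  have h0 : (WithLp.toLp 2 (Function.update x l (x l)) : PiLp 2 E) = x := by simp
  have h := HasFDerivAt.comp (x := x l) (g := g)
    (h0 ▸ hg.hasFDerivAt) (hasFDerivAt_update_piLp x l)
  simpa [Function.comp_def, h0] using h

lemma inner_single_component {ι : Type*} [Fintype ι] [DecidableEq ι] {E : ι → Type*}
    [∀ i, NormedAddCommGroup (E i)] [∀ i, InnerProductSpace ℝ (E i)]
    [CompleteSpace (PiLp 2 E)] (g : PiLp 2 E → ℝ) (x : PiLp 2 E) (l : ι) :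
    ⟪x l, gradient g x l⟫ = fderiv ℝ g x (singleCLM l (x l)) := by
  rw [← inner_gradient_eq, PiLp.inner_apply]
  rw [Finset.sum_eq_single l]
  · rw [singleCLM_apply, Pi.single_eq_same, real_inner_comm]
  · intro m _ hm
    rw [singleCLM_apply, Pi.single_eq_of_ne hm, inner_zero_right]
  · intro h; exact absurd (Finset.mem_univ l) h

/-- Along gradient flow for the quadratic empirical risk, with the per-block Euler
identity, each block norm satisfies
`d/dt ‖Θ^(l)(t)‖² ≤ 2√(2 Lₙ) (C_y − √(2 Lₙ))`. -/
theorem stmt_13 (L : ℕ) (q : Fin (L + 1) → ℕ) (n : ℕ) (hn : 0 < n)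
    (f : Fin n → PiLp 2 (fun l : Fin (L + 1) => EuclideanSpace ℝ (Fin (q l))) → ℝ)
    (hf : ∀ i, Differentiable ℝ (f i))
    (y : Fin n → ℝ) (Cy : ℝ) (hy : ∀ i, |y i| ≤ Cy)
    (Ln : PiLp 2 (fun l : Fin (L + 1) => EuclideanSpace ℝ (Fin (q l))) → ℝ)
    (hLn : ∀ Θ', Ln Θ' = (1 / (2 * (n : ℝ))) * ∑ i, (f i Θ' - y i) ^ 2)
    (heuler : ∀ i, ∀ Θ' : PiLp 2 (fun l : Fin (L + 1) => EuclideanSpace ℝ (Fin (q l))),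
      ∀ l : Fin (L + 1),
        ⟪Θ' l, gradient (fun v => f i (WithLp.toLp 2 (Function.update Θ' l v))) (Θ' l)⟫ = f i Θ')
    (Θ : ℝ → PiLp 2 (fun l : Fin (L + 1) => EuclideanSpace ℝ (Fin (q l))))
    (hflow : ∀ t : ℝ, HasDerivAt Θ (-(gradient Ln (Θ t))) t) :
    ∀ t : ℝ, 0 ≤ t → ∀ l : Fin (L + 1),
      deriv (fun s => ‖Θ s l‖ ^ 2) t ≤
        2 * Real.sqrt (2 * Ln (Θ t)) * (Cy - Real.sqrt (2 * Ln (Θ t))) := by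
  intro t ht l
  classical
  have hn' : (0:ℝ) < n := Nat.cast_pos.mpr hn
  set Θ' := Θ t with hΘ'
  -- derivative of each squared residual
  have hDi : ∀ i : Fin n, HasFDerivAt (fun Z => (f i Z - y i) ^ 2)
      ((2 * (f i Θ' - y i)) • fderiv ℝ (f i) Θ') Θ' := by
    intro i
    have h1 : HasFDerivAt (fun Z => f i Z - y i) (fderiv ℝ (f i) Θ') Θ' :=
      ((hf i Θ').hasFDerivAt).sub_const _
    have h2 := h1.mul h1
    have heq : (fun Z => (f i Z - y i) ^ 2) = fun Z => (f i Z - y i) * (f i Z - y i) := by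
      funext Z; ring
    rw [heq]
    refine h2.congr_fderiv ?_
    rw [two_mul, add_smul]
  have hD : HasFDerivAt Ln
      ((1 / (2 * (n:ℝ))) • ∑ i : Fin n, ((2 * (f i Θ' - y i)) • fderiv ℝ (f i) Θ')) Θ' := by
    have hLn' : Ln = fun Z => (1 / (2 * (n:ℝ))) * ∑ i, (f i Z - y i) ^ 2 := funext hLn
    rw [hLn']
    exact (HasFDerivAt.fun_sum (fun i _ => hDi i)).const_mul _
  -- Euler identity in fderiv form
  have hfd_single : ∀ i : Fin n, fderiv ℝ (f i) Θ' (singleCLM l (Θ' l)) = f i Θ' := by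
    intro i
    have hp := hasFDerivAt_partial (f i) Θ' l (hf i Θ')
    have h1 := heuler i Θ' l
    rw [real_inner_comm, inner_gradient_eq, hp.fderiv] at h1
    simpa using h1
  -- the key identity for the block inner product
  have key : ⟪Θ' l, gradient Ln Θ' l⟫ = (1 / (n:ℝ)) * ∑ i, (f i Θ' - y i) * f i Θ' := by
    rw [inner_single_component Ln Θ' l, hD.fderiv]
    rw [ContinuousLinearMap.smul_apply, ContinuousLinearMap.sum_apply]
    simp only [ContinuousLinearMap.smul_apply, hfd_single, smul_eq_mul]
    rw [Finset.mul_sum, Finset.mul_sum]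
    refine Finset.sum_congr rfl fun i _ => ?_
    field_simp
  -- derivative of the block
  have hgl : HasDerivAt (fun s => Θ s l) (-(gradient Ln Θ' l)) t := by
    have h := (PiLp.proj 2 (fun l : Fin (L+1) => EuclideanSpace ℝ (Fin (q l)))
      l).hasFDerivAt.comp_hasDerivAt t (hflow t)
    exact h
  have hds : HasDerivAt (fun s => ‖Θ s l‖ ^ 2)
      (2 * ⟪Θ' l, -(gradient Ln Θ' l)⟫) t := by
    have h2 := HasDerivAt.inner ℝ hgl hgl
    have heq : (fun s => ‖Θ s l‖ ^ 2) = fun s => ⟪Θ s l, Θ s l⟫ := by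
      funext s; rw [real_inner_self_eq_norm_sq]
    rw [heq]
    refine h2.congr_deriv ?_
    rw [real_inner_comm (-(gradient Ln Θ' l)) (Θ t l)]
    ring
  have hderiv : deriv (fun s => ‖Θ s l‖ ^ 2) t = -2 * ⟪Θ' l, gradient Ln Θ' l⟫ := by
    rw [hds.deriv, inner_neg_right]; ring
  rw [hderiv, key]
  -- numerical estimate
  set S := ∑ i, (f i Θ' - y i) ^ 2 with hSdef
  have hS0 : (0:ℝ) ≤ S := Finset.sum_nonneg fun i _ => sq_nonneg _
  have hCy0 : (0:ℝ) ≤ Cy := le_trans (abs_nonneg _) (hy ⟨0, hn⟩)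
  set r := Real.sqrt (2 * Ln Θ') with hrdef
  have hr0 : 0 ≤ r := Real.sqrt_nonneg _
  have h2Ln : 2 * Ln Θ' = S / n := by rw [hLn Θ', ← hSdef]; field_simp
  have hr2 : r ^ 2 = S / n := by
    rw [hrdef, Real.sq_sqrt]; · exact h2Ln
    rw [h2Ln]; positivity
  have hSr : S = n * r ^ 2 := by rw [hr2, mul_div_cancel₀ _ (ne_of_gt hn')]
  -- Cauchy-Schwarz
  have hsn : Real.sqrt n ≠ 0 := ne_of_gt (Real.sqrt_pos.mpr hn')
  have hsqS : Real.sqrt S = Real.sqrt n * r := by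
    rw [hrdef, h2Ln, Real.sqrt_div hS0, mul_comm, div_mul_cancel₀ _ hsn]
  have hcs : ∑ i, (f i Θ' - y i) * (-(y i)) ≤ (n:ℝ) * r * Cy := by
    have h1 := Real.sum_mul_le_sqrt_mul_sqrt Finset.univ
      (fun i => f i Θ' - y i) (fun i => -(y i))
    have h2 : ∑ i, (-(y i)) ^ 2 ≤ (n:ℝ) * Cy ^ 2 := by
      calc ∑ i : Fin n, (-(y i)) ^ 2 ≤ ∑ _i : Fin n, Cy ^ 2 := by
            refine Finset.sum_le_sum fun i _ => ?_
            rw [neg_pow, ← sq_abs]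
            simpa using pow_le_pow_left₀ (abs_nonneg _) (hy i) 2
        _ = (n:ℝ) * Cy ^ 2 := by simp [mul_comm]
    have h3 : Real.sqrt (∑ i, (-(y i)) ^ 2) ≤ Real.sqrt n * Cy := by
      calc Real.sqrt (∑ i, (-(y i)) ^ 2) ≤ Real.sqrt ((n:ℝ) * Cy ^ 2) := Real.sqrt_le_sqrt h2
        _ = Real.sqrt n * Cy := by
            rw [Real.sqrt_mul (by positivity), Real.sqrt_sq hCy0]
    calc ∑ i, (f i Θ' - y i) * (-(y i)) ≤ Real.sqrt S * Real.sqrt (∑ i, (-(y i)) ^ 2) := h1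
      _ ≤ Real.sqrt S * (Real.sqrt n * Cy) := by
          exact mul_le_mul_of_nonneg_left h3 (Real.sqrt_nonneg _)
      _ = (n:ℝ) * r * Cy := by
          rw [hsqS]
          have h4 : Real.sqrt n * Real.sqrt n = (n:ℝ) := Real.mul_self_sqrt (by positivity)
          linear_combination r * Cy * h4
  have hsplit : ∑ i, (f i Θ' - y i) * f i Θ'
      = S + ∑ i, (f i Θ' - y i) * y i := by
    rw [hSdef, ← Finset.sum_add_distrib]
    refine Finset.sum_congr rfl fun i _ => ?_
    ring
  have hU : -(∑ i, (f i Θ' - y i) * y i) ≤ (n:ℝ) * r * Cy := by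
    calc -(∑ i, (f i Θ' - y i) * y i) = ∑ i, (f i Θ' - y i) * (-(y i)) := by
          rw [← Finset.sum_neg_distrib]; exact Finset.sum_congr rfl fun i _ => by ring
      _ ≤ (n:ℝ) * r * Cy := hcs
  rw [hsplit]
  have hgoal : -2 * ((1 / (n:ℝ)) * (S + ∑ i, (f i Θ' - y i) * y i)) ≤ 2 * r * (Cy - r) := by
    rw [show -2 * ((1 / (n:ℝ)) * (S + ∑ i, (f i Θ' - y i) * y i))
        = (-2 * S - 2 * ∑ i, (f i Θ' - y i) * y i) / n by field_simp; ring]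
    rw [div_le_iff₀ hn']
    nlinarith [hU, hSr]
  exact hgoal
end

section
/- Let (a_t)_{t≥0} be a nonnegative sequence satisfying a_{t+1} ≤ a_t + η_t² K a_t^L + 2η_t ψ_t, where K > 0, L ≥ 1, ψ_t ∈ [0, 1/4], and η_t = η/(t+1)^α with α ∈ ((L+1)/(L+2), 1). Then, provided η is sufficiently small (depending on a_0, K, L, α), for all T ≥ 1: a_T ≤ (1+3λ²)a_0 + Σ_{t=0}^{T-1} 2η_t ψ_t, for any fixed λ ∈ (0, 1/√3) used in the smallness condition on η. -/
private lemma aux_pow {p x : ℝ} (hp0 : 0 < p) (hp1 : p ≤ 1) (hx : 0 ≤ x) :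
    x ^ p + p * (x + 1) ^ (p - 1) ≤ (x + 1) ^ p := by
  have h1 : (0:ℝ) < x + 1 := by linarith
  have hs : (-1:ℝ) ≤ -(1/(x+1)) := by
    have : 1/(x+1) ≤ 1 := by rw [div_le_one h1]; linarith
    linarith
  have hb := rpow_one_add_le_one_add_mul_self hs hp0.le hp1
  have he : (1:ℝ) + -(1/(x+1)) = x/(x+1) := by field_simp; ring
  rw [he] at hb
  have hxeq : (x/(x+1)) ^ p * (x+1) ^ p = x ^ p := by
    rw [← Real.mul_rpow (div_nonneg hx h1.le) h1.le]
    congr 1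
    field_simp
  have hYpos : (0:ℝ) < (x+1) ^ p := Real.rpow_pos_of_pos h1 p
  have h2 : (x/(x+1)) ^ p * (x+1) ^ p ≤ (1 + p * -(1/(x+1))) * (x+1) ^ p :=
    mul_le_mul_of_nonneg_right hb hYpos.le
  rw [hxeq] at h2
  have h4 : (x+1) ^ (p-1) = (x+1) ^ p / (x+1) := by
    rw [Real.rpow_sub h1, Real.rpow_one]
  have h5 : (1 + p * -(1/(x+1))) * (x+1) ^ p = (x+1) ^ p - p * ((x+1) ^ p / (x+1)) := by
    ring
  rw [h5] at h2
  rw [h4]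
  linarith

private lemma aux_inv {g x : ℝ} (hg0 : 0 < g) (hg1 : g ≤ 1) (hx : 0 < x) :
    g * (x + 1) ^ (-(g + 1)) ≤ x ^ (-g) - (x + 1) ^ (-g) := by
  have h1 : (0:ℝ) < x + 1 := by linarith
  have hX : 0 < x ^ g := Real.rpow_pos_of_pos hx g
  have hY : 0 < (x+1) ^ g := Real.rpow_pos_of_pos h1 g
  have hW : 0 < (x+1) ^ (-(g+1)) := Real.rpow_pos_of_pos h1 _
  have hXY : x ^ g ≤ (x+1) ^ g := Real.rpow_le_rpow hx.le (by linarith) hg0.le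
  have hZ : (x+1) ^ (-(g+1)) * ((x+1) ^ g * (x+1) ^ g) = (x+1) ^ (g-1) := by
    rw [← Real.rpow_add h1, ← Real.rpow_add h1]
    congr 1
    ring
  have hpow := aux_pow hg0 hg1 hx.le
  rw [← hZ] at hpow
  rw [Real.rpow_neg hx.le g, Real.rpow_neg h1.le g]
  have hid : (x ^ g)⁻¹ - ((x+1) ^ g)⁻¹ = ((x+1) ^ g - x ^ g)/(x ^ g * (x+1) ^ g) := by
    field_simp
  rw [hid, le_div_iff₀ (mul_pos hX hY)]
  nlinarith [hpow, mul_le_mul_of_nonneg_left hXY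
    (mul_nonneg (mul_nonneg hg0.le hW.le) hY.le)]

private lemma sumHa {α : ℝ} (h0 : 0 < 1 - α) (hα0 : 0 ≤ α) (N : ℕ) :
    ∑ n ∈ Finset.range N, ((n : ℝ) + 2) ^ (-α) ≤ (((N : ℝ) + 1) ^ (1-α) - 1)/(1-α) := by
  induction N with
  | zero => norm_num [Real.one_rpow]
  | succ N ih =>
    rw [Finset.sum_range_succ]
    push_cast
    rw [show (N:ℝ)+1+1 = (N:ℝ)+2 by ring]
    have key := aux_pow h0 (by linarith : 1-α ≤ 1) (show (0:ℝ) ≤ (N:ℝ)+1 by positivity)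
    rw [show (N:ℝ)+1+1 = (N:ℝ)+2 by ring, show 1-α-1 = -α by ring] at key
    have h3 : ((N:ℝ)+2) ^ (-α) ≤ (((N:ℝ)+2) ^ (1-α) - ((N:ℝ)+1) ^ (1-α))/(1-α) := by
      rw [le_div_iff₀ h0]; linarith
    have h4 : (((N:ℝ)+1) ^ (1-α) - 1)/(1-α) + (((N:ℝ)+2) ^ (1-α) - ((N:ℝ)+1) ^ (1-α))/(1-α)
        = (((N:ℝ)+2) ^ (1-α) - 1)/(1-α) := by ring
    linarith [add_le_add ih h3]

private lemma sumBg {g : ℝ} (hg0 : 0 < g) (hg1 : g ≤ 1) (N : ℕ) :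
    ∑ n ∈ Finset.range N, ((n : ℝ) + 2) ^ (-(g+1)) ≤ (1 - ((N : ℝ) + 1) ^ (-g))/g := by
  induction N with
  | zero => norm_num [Real.one_rpow]
  | succ N ih =>
    rw [Finset.sum_range_succ]
    push_cast
    rw [show (N:ℝ)+1+1 = (N:ℝ)+2 by ring]
    have key := aux_inv hg0 hg1 (show (0:ℝ) < (N:ℝ)+1 by positivity)
    rw [show (N:ℝ)+1+1 = (N:ℝ)+2 by ring] at key
    have h3 : ((N:ℝ)+2) ^ (-(g+1)) ≤ (((N:ℝ)+1) ^ (-g) - ((N:ℝ)+2) ^ (-g))/g := by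
      rw [le_div_iff₀ hg0]; linarith
    have h4 : (1 - ((N:ℝ)+1) ^ (-g))/g + (((N:ℝ)+1) ^ (-g) - ((N:ℝ)+2) ^ (-g))/g
        = (1 - ((N:ℝ)+2) ^ (-g))/g := by ring
    linarith [add_le_add ih h3]

set_option maxHeartbeats 1000000 in
/-- Abstract GD norm recursion: if `a_{t+1} ≤ a_t + η_t² K a_t^L + 2 η_t ψ_t` with
`η_t = η/(t+1)^α`, `α ∈ ((L+1)/(L+2), 1)`, `ψ_t ∈ [0, 1/4]`, and `η` small enough
(depending on `a₀, K, L, α` through the fixed `λ ∈ (0, 1/√3)`), then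
`a_T ≤ (1+3λ²) a₀ + Σ_{t<T} 2 η_t ψ_t` for all `T ≥ 1`. -/
theorem stmt_15 (L : ℕ) (hL : 1 ≤ L) (K : ℝ) (hK : 0 < K)
    (α : ℝ) (hα1 : ((L : ℝ) + 1) / ((L : ℝ) + 2) < α) (hα2 : α < 1)
    (lam : ℝ) (hlam0 : 0 < lam) (hlam1 : lam < 1 / Real.sqrt 3)
    (a : ℕ → ℝ) (ha : ∀ t, 0 ≤ a t) (ha0 : 0 < a 0)
    (ψ : ℕ → ℝ) (hψ0 : ∀ t, 0 ≤ ψ t) (hψ1 : ∀ t, ψ t ≤ 1 / 4)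
    (η : ℝ) (hη0 : 0 < η)
    (hηsmall : η ≤
      min (lam / (Real.sqrt K * a 0 ^ (((L : ℝ) - 1) / 2)))
        (min (2 * (1 - α) * lam ^ 2 * a 0)
          (lam * Real.sqrt (((L : ℝ) + 2) * α - ((L : ℝ) + 1)) /
            (Real.sqrt K * (1 + 3 * lam ^ 2) ^ ((L : ℝ) / 2) *
              a 0 ^ (((L : ℝ) - 1) / 2)))))
    (hrec : ∀ t : ℕ,
      a (t + 1) ≤ a t + (η / ((t : ℝ) + 1) ^ α) ^ 2 * K * (a t) ^ L +
        2 * (η / ((t : ℝ) + 1) ^ α) * ψ t) :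
    ∀ T : ℕ, 1 ≤ T →
      a T ≤ (1 + 3 * lam ^ 2) * a 0 +
        ∑ t ∈ Finset.range T, 2 * (η / ((t : ℝ) + 1) ^ α) * ψ t := by
  have hL2 : (0:ℝ) < (L:ℝ) + 2 := by positivity
  have hα0 : (0:ℝ) ≤ α := le_of_lt (lt_of_le_of_lt (by positivity) hα1)
  have hp0 : 0 < 1 - α := by linarith
  set γ : ℝ := ((L : ℝ) + 2) * α - ((L : ℝ) + 1) with hγdef
  have hγ0 : 0 < γ := by
    have h := (div_lt_iff₀ hL2).mp hα1
    rw [hγdef]; linarith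
  have hγ1 : γ ≤ 1 := by
    have h : ((L:ℝ)+2) * α < ((L:ℝ)+2) * 1 := by
      exact mul_lt_mul_of_pos_left hα2 hL2
    rw [hγdef]; linarith
  -- extract smallness conditions
  have hη2 : η ≤ 2 * (1 - α) * lam ^ 2 * a 0 :=
    le_trans hηsmall (le_trans (min_le_right _ _) (min_le_left _ _))
  have hη3' : η ≤ lam * Real.sqrt γ /
      (Real.sqrt K * (1 + 3 * lam ^ 2) ^ ((L : ℝ) / 2) * a 0 ^ (((L : ℝ) - 1) / 2)) :=
    le_trans hηsmall (le_trans (min_le_right _ _) (min_le_right _ _))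
  clear_value γ
  have hden : (0:ℝ) < Real.sqrt K * (1 + 3 * lam ^ 2) ^ ((L : ℝ) / 2) *
      a 0 ^ (((L : ℝ) - 1) / 2) :=
    mul_pos (mul_pos (Real.sqrt_pos.mpr hK) (Real.rpow_pos_of_pos (by positivity) _))
      (Real.rpow_pos_of_pos ha0 _)
  have hη3 : η * (Real.sqrt K * (1 + 3 * lam ^ 2) ^ ((L : ℝ) / 2) *
      a 0 ^ (((L : ℝ) - 1) / 2)) ≤ lam * Real.sqrt γ := (le_div_iff₀ hden).mp hη3'
  have hq : η ^ 2 * (K * (1 + 3 * lam ^ 2) ^ L * a 0 ^ (L - 1)) ≤ lam ^ 2 * γ := by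
    have hnn : 0 ≤ η * (Real.sqrt K * (1 + 3 * lam ^ 2) ^ ((L : ℝ) / 2) *
        a 0 ^ (((L : ℝ) - 1) / 2)) := mul_nonneg hη0.le hden.le
    have h2 := mul_le_mul hη3 hη3 hnn (mul_nonneg hlam0.le (Real.sqrt_nonneg γ))
    have e1 : Real.sqrt γ * Real.sqrt γ = γ := Real.mul_self_sqrt hγ0.le
    have e2 : Real.sqrt K * Real.sqrt K = K := Real.mul_self_sqrt hK.le
    have e3 : (1 + 3 * lam ^ 2) ^ ((L : ℝ) / 2) * (1 + 3 * lam ^ 2) ^ ((L : ℝ) / 2)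
        = (1 + 3 * lam ^ 2) ^ L := by
      rw [← Real.rpow_add (by positivity), ← Real.rpow_natCast (1 + 3 * lam ^ 2) L]
      congr 1
      ring
    have e4 : a 0 ^ (((L : ℝ) - 1) / 2) * a 0 ^ (((L : ℝ) - 1) / 2) = a 0 ^ (L - 1) := by
      rw [← Real.rpow_add ha0, ← Real.rpow_natCast (a 0) (L - 1)]
      congr 1
      rw [Nat.cast_sub hL]
      push_cast
      ring
    calc η ^ 2 * (K * (1 + 3 * lam ^ 2) ^ L * a 0 ^ (L - 1))
        = (η * (Real.sqrt K * (1 + 3 * lam ^ 2) ^ ((L : ℝ) / 2) *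
            a 0 ^ (((L : ℝ) - 1) / 2))) *
          (η * (Real.sqrt K * (1 + 3 * lam ^ 2) ^ ((L : ℝ) / 2) *
            a 0 ^ (((L : ℝ) - 1) / 2))) := by
          rw [show (η * (Real.sqrt K * (1 + 3 * lam ^ 2) ^ ((L : ℝ) / 2) *
              a 0 ^ (((L : ℝ) - 1) / 2))) *
            (η * (Real.sqrt K * (1 + 3 * lam ^ 2) ^ ((L : ℝ) / 2) *
              a 0 ^ (((L : ℝ) - 1) / 2)))
            = η ^ 2 * ((Real.sqrt K * Real.sqrt K) *
                (((1 + 3 * lam ^ 2) ^ ((L : ℝ) / 2)) * ((1 + 3 * lam ^ 2) ^ ((L : ℝ) / 2))) *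
                ((a 0 ^ (((L : ℝ) - 1) / 2)) * (a 0 ^ (((L : ℝ) - 1) / 2)))) from by ring,
            e2, e3, e4]
      _ ≤ (lam * Real.sqrt γ) * (lam * Real.sqrt γ) := h2
      _ = lam ^ 2 * γ := by
          rw [show (lam * Real.sqrt γ) * (lam * Real.sqrt γ)
            = lam ^ 2 * (Real.sqrt γ * Real.sqrt γ) from by ring, e1]
  -- nonnegativity of the summands
  have hq0 : ∀ i : ℕ, 0 ≤ (η / ((i : ℝ) + 1) ^ α) ^ 2 * K * a i ^ L := fun i =>
    mul_nonneg (mul_nonneg (sq_nonneg _) hK.le) (pow_nonneg (ha i) L)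
  have hσ0 : ∀ i : ℕ, 0 ≤ 2 * (η / ((i : ℝ) + 1) ^ α) * ψ i := fun i => by
    have hb : (0:ℝ) < ((i : ℝ) + 1) ^ α := Real.rpow_pos_of_pos (by positivity) α
    have : 0 ≤ η / ((i : ℝ) + 1) ^ α := le_of_lt (div_pos hη0 hb)
    exact mul_nonneg (by linarith) (hψ0 i)
  -- telescoped recursion
  have h1 : ∀ t : ℕ, a t ≤ a 0 +
      (∑ s ∈ Finset.range t, (η / ((s : ℝ) + 1) ^ α) ^ 2 * K * a s ^ L) +
      (∑ s ∈ Finset.range t, 2 * (η / ((s : ℝ) + 1) ^ α) * ψ s) := by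
    intro t
    induction t with
    | zero => simp
    | succ t ih =>
      rw [Finset.sum_range_succ, Finset.sum_range_succ]
      linarith [hrec t]
  -- bound on the ψ-sum
  have hS : ∀ s : ℕ, (∑ u ∈ Finset.range s, 2 * (η / ((u : ℝ) + 1) ^ α) * ψ u)
      ≤ lam ^ 2 * a 0 * (s : ℝ) ^ (1 - α) := by
    intro s
    cases s with
    | zero =>
      simp [Real.zero_rpow hp0.ne']
    | succ N =>
      have hterm : ∀ u ∈ Finset.range (N + 1),
          2 * (η / ((u : ℝ) + 1) ^ α) * ψ u ≤ η / 2 * ((u : ℝ) + 1) ^ (-α) := by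
        intro u _
        have hb : (0:ℝ) < ((u : ℝ) + 1) ^ α := Real.rpow_pos_of_pos (by positivity) α
        have h4 : 2 * (η / ((u : ℝ) + 1) ^ α) * ψ u ≤ 2 * (η / ((u : ℝ) + 1) ^ α) * (1/4) := by
          apply mul_le_mul_of_nonneg_left (hψ1 u)
          have : 0 ≤ η / ((u : ℝ) + 1) ^ α := le_of_lt (div_pos hη0 hb)
          linarith
        have h5 : 2 * (η / ((u : ℝ) + 1) ^ α) * (1/4) = η / 2 * ((u : ℝ) + 1) ^ (-α) := by
          rw [Real.rpow_neg (by positivity : (0:ℝ) ≤ (u : ℝ) + 1) α]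
          ring
        linarith
      have hsum1 : ∑ u ∈ Finset.range (N + 1), ((u : ℝ) + 1) ^ (-α)
          ≤ 1 + (((N : ℝ) + 1) ^ (1 - α) - 1)/(1 - α) := by
        rw [Finset.sum_range_succ']
        have hc : ∀ i ∈ Finset.range N,
            ((((i + 1) : ℕ) : ℝ) + 1) ^ (-α) = ((i : ℝ) + 2) ^ (-α) := by
          intro i _
          congr 1
          push_cast
          ring
        rw [Finset.sum_congr rfl hc]
        have h0t : (((0 : ℕ) : ℝ) + 1) ^ (-α) = 1 := by
          norm_num [Real.one_rpow]
        rw [h0t]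
        linarith [sumHa hp0 hα0 N]
      set X : ℝ := ((N : ℝ) + 1) ^ (1 - α) with hX
      have hone : (1:ℝ) ≤ X := by
        rw [hX]
        calc (1:ℝ) = (1:ℝ) ^ (1 - α) := (Real.one_rpow _).symm
          _ ≤ ((N : ℝ) + 1) ^ (1 - α) := by
              apply Real.rpow_le_rpow (by norm_num) (by linarith [Nat.cast_nonneg (α := ℝ) N]) hp0.le
      have hgoalcast : ((N + 1 : ℕ) : ℝ) ^ (1 - α) = X := by
        rw [hX]; push_cast; ring_nf
      calc (∑ u ∈ Finset.range (N + 1), 2 * (η / ((u : ℝ) + 1) ^ α) * ψ u)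
          ≤ ∑ u ∈ Finset.range (N + 1), η / 2 * ((u : ℝ) + 1) ^ (-α) :=
            Finset.sum_le_sum hterm
        _ = η / 2 * ∑ u ∈ Finset.range (N + 1), ((u : ℝ) + 1) ^ (-α) := by
            rw [Finset.mul_sum]
        _ ≤ η / 2 * (1 + (X - 1)/(1 - α)) := by
            apply mul_le_mul_of_nonneg_left hsum1 (by positivity)
        _ ≤ lam ^ 2 * a 0 * ((N + 1 : ℕ) : ℝ) ^ (1 - α) := by
            rw [hgoalcast]
            have hnn : 0 ≤ (X - 1)/(1 - α) := div_nonneg (by linarith) hp0.le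
            have hmul : η / 2 * (1 + (X - 1)/(1 - α))
                ≤ ((1 - α) * (lam ^ 2 * a 0)) * (1 + (X - 1)/(1 - α)) := by
              apply mul_le_mul_of_nonneg_right (by linarith) (by linarith)
            have hident : ((1 - α) * (lam ^ 2 * a 0)) * (1 + (X - 1)/(1 - α))
                = lam ^ 2 * a 0 * ((1 - α) + (X - 1)) := by
              field_simp
            have hlast : lam ^ 2 * a 0 * ((1 - α) + (X - 1)) ≤ lam ^ 2 * a 0 * X := by
              apply mul_le_mul_of_nonneg_left (by linarith)
                (mul_nonneg (sq_nonneg _) ha0.le)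
            rw [hident] at hmul
            linarith
  -- the power-sum bound
  have hsumB : ∀ t : ℕ, ∑ s ∈ Finset.range t, ((s : ℝ) + 1) ^ (-(γ + 1)) ≤ 1 + 1/γ := by
    intro t
    have h1γ : 0 < 1/γ := one_div_pos.mpr hγ0
    cases t with
    | zero =>
      simp only [Finset.range_zero, Finset.sum_empty]
      linarith
    | succ N =>
      rw [Finset.sum_range_succ']
      have hc : ∀ i ∈ Finset.range N,
          ((((i + 1) : ℕ) : ℝ) + 1) ^ (-(γ + 1)) = ((i : ℝ) + 2) ^ (-(γ + 1)) := by
        intro i _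
        congr 1
        push_cast
        ring
      rw [Finset.sum_congr rfl hc]
      have h0t : (((0 : ℕ) : ℝ) + 1) ^ (-(γ + 1)) = 1 := by
        norm_num [Real.one_rpow]
      rw [h0t]
      have hB := sumBg hγ0 hγ1 N
      have hXnn : 0 ≤ ((N : ℝ) + 1) ^ (-γ) := Real.rpow_nonneg (by positivity) _
      have hfr : (1 - ((N : ℝ) + 1) ^ (-γ))/γ ≤ 1/γ := by
        gcongr
        linarith
      linarith
  -- growth bound, assuming invariant up to s
  have hgrow : ∀ s : ℕ,
      (∑ u ∈ Finset.range s, (η / ((u : ℝ) + 1) ^ α) ^ 2 * K * a u ^ L) ≤ 2 * lam ^ 2 * a 0 →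
      a s ≤ (1 + 3 * lam ^ 2) * a 0 * ((s : ℝ) + 1) ^ (1 - α) := by
    intro s hQs
    have h1s := h1 s
    have hSs := hS s
    have hx1 : (1:ℝ) ≤ ((s : ℝ) + 1) ^ (1 - α) := by
      calc (1:ℝ) = (1:ℝ) ^ (1 - α) := (Real.one_rpow _).symm
        _ ≤ ((s : ℝ) + 1) ^ (1 - α) := by
            apply Real.rpow_le_rpow (by norm_num) (by linarith [Nat.cast_nonneg (α := ℝ) s]) hp0.le
    have hx2 : (s : ℝ) ^ (1 - α) ≤ ((s : ℝ) + 1) ^ (1 - α) :=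
      Real.rpow_le_rpow (Nat.cast_nonneg s) (by linarith) hp0.le
    nlinarith [h1s, hQs, hSs,
      mul_nonneg (mul_nonneg (sq_nonneg lam) ha0.le) (sub_nonneg.mpr hx2),
      mul_nonneg (mul_nonneg (sq_nonneg lam) ha0.le) (sub_nonneg.mpr hx1),
      mul_nonneg ha0.le (sub_nonneg.mpr hx1)]
  -- per-term bound on the q-sum
  have hqle : ∀ s : ℕ, a s ≤ (1 + 3 * lam ^ 2) * a 0 * ((s : ℝ) + 1) ^ (1 - α) →
      (η / ((s : ℝ) + 1) ^ α) ^ 2 * K * a s ^ L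
        ≤ η ^ 2 * (K * (1 + 3 * lam ^ 2) ^ L * a 0 ^ (L - 1)) * a 0 *
            ((s : ℝ) + 1) ^ (-(γ + 1)) := by
    intro s hs
    have hx : (0:ℝ) < (s : ℝ) + 1 := by positivity
    have hb : a s ^ L ≤ ((1 + 3 * lam ^ 2) * a 0 * ((s : ℝ) + 1) ^ (1 - α)) ^ L :=
      pow_le_pow_left₀ (ha s) hs L
    have hexp : (((s : ℝ) + 1) ^ (1 - α)) ^ L = ((s : ℝ) + 1) ^ ((1 - α) * (L : ℝ)) := by
      rw [← Real.rpow_natCast (((s : ℝ) + 1) ^ (1 - α)) L, ← Real.rpow_mul hx.le]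
    have hA2 : (((s : ℝ) + 1) ^ α) ^ 2 = ((s : ℝ) + 1) ^ (α * (2 : ℝ)) := by
      rw [← Real.rpow_natCast (((s : ℝ) + 1) ^ α) 2, ← Real.rpow_mul hx.le]
      norm_num
    have hL' : a 0 ^ L = a 0 ^ (L - 1) * a 0 := by
      rw [← pow_succ, Nat.sub_add_cancel hL]
    have hfin : ((s : ℝ) + 1) ^ ((1 - α) * (L : ℝ)) / ((s : ℝ) + 1) ^ (α * (2 : ℝ))
        = ((s : ℝ) + 1) ^ (-(γ + 1)) := by
      rw [← Real.rpow_sub hx]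
      congr 1
      rw [hγdef]
      ring
    calc (η / ((s : ℝ) + 1) ^ α) ^ 2 * K * a s ^ L
        ≤ (η / ((s : ℝ) + 1) ^ α) ^ 2 * K *
            ((1 + 3 * lam ^ 2) * a 0 * ((s : ℝ) + 1) ^ (1 - α)) ^ L := by
          exact mul_le_mul_of_nonneg_left hb (mul_nonneg (sq_nonneg _) hK.le)
      _ = η ^ 2 * (K * (1 + 3 * lam ^ 2) ^ L * a 0 ^ (L - 1)) * a 0 *
            (((s : ℝ) + 1) ^ ((1 - α) * (L : ℝ)) / ((s : ℝ) + 1) ^ (α * (2 : ℝ))) := by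
          rw [mul_pow, mul_pow, hexp, div_pow, hA2, hL']
          ring
      _ = η ^ 2 * (K * (1 + 3 * lam ^ 2) ^ L * a 0 ^ (L - 1)) * a 0 *
            ((s : ℝ) + 1) ^ (-(γ + 1)) := by
          rw [hfin]
  -- the key invariant
  have key : ∀ t : ℕ,
      (∑ s ∈ Finset.range t, (η / ((s : ℝ) + 1) ^ α) ^ 2 * K * a s ^ L)
        ≤ 2 * lam ^ 2 * a 0 := by
    intro t
    induction t with
    | zero =>
      simp
      exact mul_nonneg (mul_nonneg (by norm_num) (sq_nonneg lam)) ha0.le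
    | succ t ih =>
      have hterm : ∀ s ∈ Finset.range (t + 1),
          (η / ((s : ℝ) + 1) ^ α) ^ 2 * K * a s ^ L
            ≤ η ^ 2 * (K * (1 + 3 * lam ^ 2) ^ L * a 0 ^ (L - 1)) * a 0 *
                ((s : ℝ) + 1) ^ (-(γ + 1)) := by
        intro s hsmem
        apply hqle s
        apply hgrow s
        have hsub : Finset.range s ⊆ Finset.range t :=
          Finset.range_subset_range.mpr (Nat.lt_succ_iff.mp (Finset.mem_range.mp hsmem))
        calc (∑ u ∈ Finset.range s, (η / ((u : ℝ) + 1) ^ α) ^ 2 * K * a u ^ L)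
            ≤ (∑ u ∈ Finset.range t, (η / ((u : ℝ) + 1) ^ α) ^ 2 * K * a u ^ L) :=
              Finset.sum_le_sum_of_subset_of_nonneg hsub (fun i _ _ => hq0 i)
          _ ≤ 2 * lam ^ 2 * a 0 := ih
      have hCnn : 0 ≤ η ^ 2 * (K * (1 + 3 * lam ^ 2) ^ L * a 0 ^ (L - 1)) * a 0 :=
        mul_nonneg (mul_nonneg (sq_nonneg η)
          (mul_nonneg (mul_nonneg hK.le (by positivity)) (pow_nonneg ha0.le _))) ha0.le
      calc (∑ s ∈ Finset.range (t + 1), (η / ((s : ℝ) + 1) ^ α) ^ 2 * K * a s ^ L)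
          ≤ ∑ s ∈ Finset.range (t + 1),
              η ^ 2 * (K * (1 + 3 * lam ^ 2) ^ L * a 0 ^ (L - 1)) * a 0 *
                ((s : ℝ) + 1) ^ (-(γ + 1)) := Finset.sum_le_sum hterm
        _ = η ^ 2 * (K * (1 + 3 * lam ^ 2) ^ L * a 0 ^ (L - 1)) * a 0 *
              ∑ s ∈ Finset.range (t + 1), ((s : ℝ) + 1) ^ (-(γ + 1)) := by
            rw [← Finset.mul_sum]
        _ ≤ η ^ 2 * (K * (1 + 3 * lam ^ 2) ^ L * a 0 ^ (L - 1)) * a 0 * (1 + 1/γ) :=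
            mul_le_mul_of_nonneg_left (hsumB (t + 1)) hCnn
        _ ≤ 2 * lam ^ 2 * a 0 := by
            have h11 : (0:ℝ) < 1 + 1/γ := by
              have := one_div_pos.mpr hγ0; linarith
            have h12 : η ^ 2 * (K * (1 + 3 * lam ^ 2) ^ L * a 0 ^ (L - 1)) * a 0 * (1 + 1/γ)
                ≤ lam ^ 2 * γ * (a 0 * (1 + 1/γ)) := by
              calc η ^ 2 * (K * (1 + 3 * lam ^ 2) ^ L * a 0 ^ (L - 1)) * a 0 * (1 + 1/γ)
                  = (η ^ 2 * (K * (1 + 3 * lam ^ 2) ^ L * a 0 ^ (L - 1))) *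
                      (a 0 * (1 + 1/γ)) := by ring
                _ ≤ lam ^ 2 * γ * (a 0 * (1 + 1/γ)) :=
                    mul_le_mul_of_nonneg_right hq (mul_nonneg ha0.le h11.le)
            have h13 : lam ^ 2 * γ * (a 0 * (1 + 1/γ)) = lam ^ 2 * a 0 * (γ + 1) := by
              field_simp
            have h14 : lam ^ 2 * a 0 * (γ + 1) ≤ lam ^ 2 * a 0 * 2 :=
              mul_le_mul_of_nonneg_left (by linarith)
                (mul_nonneg (sq_nonneg _) ha0.le)
            rw [h13] at h12
            linarith
  intro T _
  have hT := h1 T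
  have hk := key T
  have hnn : 0 ≤ lam ^ 2 * a 0 := mul_nonneg (sq_nonneg _) ha0.le
  linarith [hT, hk, hnn]
end

section
/- Let ℓ(f,g) = |f−g|^α/α with integer α ≥ 2, and let L_n(Θ) = (1/n)Σ_i ℓ(f(x_i;Θ), y_i) with |y_i| ≤ C_y. If f satisfies the per-block Euler identity ⟨Θ^(l), ∂f(x;Θ)/∂Θ^(l)⟩ = f(x;Θ), then −2⟨Θ^(l), ∂L_n/∂Θ^(l)⟩ ≤ 2·(αL_n(Θ))^{(α−1)/α}·(C_y − (αL_n(Θ))^{1/α}). -/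
open scoped RealInnerProductSpace


lemma hasDerivAt_abs_pow {a : ℕ} (ha : 2 ≤ a) (t : ℝ) :
    HasDerivAt (fun s : ℝ => |s| ^ a) ((a : ℝ) * |t| ^ (a - 2) * t) t := by
  have ha1 : a - 1 = (a - 2) + 1 := by omega
  rcases lt_trichotomy t 0 with ht | ht | ht
  · have h := ((hasDerivAt_pow a (-t)).comp t (hasDerivAt_neg t))
    have he : (fun s : ℝ => |s| ^ a) =ᶠ[nhds t] ((fun x : ℝ => x ^ a) ∘ Neg.neg) := by
      filter_upwards [Iio_mem_nhds ht] with s hs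
      simp [Function.comp, abs_of_neg (Set.mem_Iio.mp hs)]
    have := h.congr_of_eventuallyEq he
    have hv : (a:ℝ) * |t| ^ (a - 2) * t = ↑a * (-t) ^ (a - 1) * -1 := by
      rw [abs_of_neg ht, ha1]
      ring
    rw [hv]; exact this
  · subst ht
    have : HasDerivAt (fun s : ℝ => |s| ^ a) 0 0 := by
      rw [hasDerivAt_iff_tendsto_slope]
      apply squeeze_zero_norm' (a := fun s : ℝ => |s|)
      · filter_upwards [inter_mem_nhdsWithin _ (Ioo_mem_nhds (by norm_num : (-1:ℝ) < 0) (by norm_num : (0:ℝ) < 1))]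
          with s hs
        have hs0 : s ≠ 0 := hs.1
        have hs1 : |s| ≤ 1 := by
          rw [abs_le]; exact ⟨hs.2.1.le, hs.2.2.le⟩
        have hsl : slope (fun s : ℝ => |s| ^ a) 0 s = |s| ^ a / s := by
          simp only [slope_def_field, div_sub_div_same, sub_zero]
          rw [abs_zero, zero_pow (by omega : a ≠ 0), sub_zero]
        rw [hsl, Real.norm_eq_abs, abs_div, abs_pow, abs_abs,
          div_le_iff₀ (abs_pos.2 hs0)]
        calc |s| ^ a = |s| ^ (a - 2) * (|s| * |s|) := by
              rw [← pow_two, ← pow_add]; congr 1; omega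
          _ ≤ 1 * (|s| * |s|) := by
              apply mul_le_mul_of_nonneg_right _ (by positivity)
              exact pow_le_one₀ (abs_nonneg s) hs1
          _ = |s| * |s| := by ring
      · exact (continuous_abs.tendsto' 0 0 (by simp)).mono_left nhdsWithin_le_nhds
    simpa using this
  · have h := hasDerivAt_pow a t
    have he : (fun s : ℝ => |s| ^ a) =ᶠ[nhds t] (fun x : ℝ => x ^ a) := by
      filter_upwards [Ioi_mem_nhds ht] with s hs
      simp [abs_of_pos (Set.mem_Ioi.mp hs)]
    have := h.congr_of_eventuallyEq he
    have hv : (a:ℝ) * |t| ^ (a - 2) * t = ↑a * t ^ (a - 1) := by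
      rw [abs_of_pos ht, ha1]
      ring
    rw [hv]; exact this


lemma final_ineq (n : ℕ) (hn : 0 < n) (a : ℕ) (ha : 2 ≤ a) (d yv : Fin n → ℝ) (Cy : ℝ)
    (hy : ∀ i, |yv i| ≤ Cy) (M : ℝ) (hM : M = (1/(n:ℝ)) * ∑ i, |d i| ^ a) :
    -2 * ((1/(n:ℝ)) * ∑ i, ((a:ℝ) * |d i| ^ (a-2) * (d i) / a) * (d i + yv i)) ≤
      2 * M ^ (((a:ℝ)-1)/(a:ℝ)) * (Cy - M ^ ((1:ℝ)/(a:ℝ))) := by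
  have ha0 : (a:ℝ) ≠ 0 := by positivity
  have ha1 : (0:ℝ) < (a:ℝ) - 1 := by
    have : (2:ℝ) ≤ (a:ℝ) := by exact_mod_cast ha
    linarith
  have hn0 : (0:ℝ) < (n:ℝ) := by exact_mod_cast hn
  have hCy : 0 ≤ Cy := le_trans (abs_nonneg _) (hy ⟨0, hn⟩)
  have hM0 : 0 ≤ M := by rw [hM]; positivity
  -- simplify the coefficient
  have hc : ∀ i, ((a:ℝ) * |d i| ^ (a-2) * (d i) / a) * (d i + yv i)
      = |d i| ^ a + (|d i| ^ (a-2) * d i) * yv i := by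
    intro i
    have h1 : ((a:ℝ) * |d i| ^ (a-2) * (d i) / a) = |d i| ^ (a-2) * d i := by
      field_simp
    rw [h1]
    have h2 : |d i| ^ (a-2) * d i * d i = |d i| ^ a := by
      have : d i * d i = |d i| * |d i| := (abs_mul_abs_self (d i)).symm
      calc |d i| ^ (a-2) * d i * d i = |d i| ^ (a-2) * (d i * d i) := by ring
        _ = |d i| ^ (a-2) * (|d i| * |d i|) := by rw [this]
        _ = |d i| ^ ((a-2) + 2) := by rw [pow_add]; ring
        _ = |d i| ^ a := by congr 1; omega
    calc |d i| ^ (a-2) * d i * (d i + yv i)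
        = |d i| ^ (a-2) * d i * d i + (|d i| ^ (a-2) * d i) * yv i := by ring
      _ = |d i| ^ a + (|d i| ^ (a-2) * d i) * yv i := by rw [h2]
  set S : ℝ := (1/(n:ℝ)) * ∑ i, |d i| ^ (a-1) with hS
  have hS0 : 0 ≤ S := by positivity
  -- bound the cross term
  have h1 : -((1/(n:ℝ)) * ∑ i, (|d i| ^ (a-2) * d i) * yv i) ≤ Cy * S := by
    rw [hS, neg_mul_eq_mul_neg, ← Finset.sum_neg_distrib, mul_comm Cy, Finset.mul_sum,
      Finset.mul_sum, Finset.sum_mul]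
    apply Finset.sum_le_sum
    intro i _
    have hb : -((|d i| ^ (a-2) * d i) * yv i) ≤ |d i| ^ (a-1) * Cy := by
      have : |(|d i| ^ (a-2) * d i) * yv i| ≤ |d i| ^ (a-1) * Cy := by
        rw [abs_mul, abs_mul, abs_pow, abs_abs]
        have : |d i| ^ (a-2) * |d i| = |d i| ^ (a-1) := by
          rw [← pow_succ]; congr 1; omega
        calc |d i| ^ (a-2) * |d i| * |yv i| = |d i| ^ (a-1) * |yv i| := by rw [this]
          _ ≤ |d i| ^ (a-1) * Cy := by
            apply mul_le_mul_of_nonneg_left (hy i) (by positivity)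
      linarith [neg_abs_le ((|d i| ^ (a-2) * d i) * yv i)]
    calc (1/(n:ℝ)) * -((|d i| ^ (a-2) * d i) * yv i) ≤ (1/(n:ℝ)) * (|d i| ^ (a-1) * Cy) := by
          apply mul_le_mul_of_nonneg_left hb (by positivity)
      _ = (1/(n:ℝ)) * |d i| ^ (a-1) * Cy := by ring
  -- Hölder / Jensen step : S ≤ M ^ ((a-1)/a)
  have h2 : S ≤ M ^ (((a:ℝ)-1)/(a:ℝ)) := by
    set p : ℝ := (a:ℝ)/((a:ℝ)-1) with hp
    have hp1 : 1 ≤ p := by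
      rw [hp, le_div_iff₀ ha1]; linarith
    have key := Real.rpow_arith_mean_le_arith_mean_rpow Finset.univ (fun _ => 1/(n:ℝ))
      (fun i => |d i| ^ (a-1)) (fun i _ => by positivity)
      (by simp [Finset.card_univ]; field_simp) (fun i _ => by positivity) hp1
    have hz : ∀ i : Fin n, ((|d i| ^ (a-1) : ℝ)) ^ p = |d i| ^ a := by
      intro i
      rw [← Real.rpow_natCast |d i| (a-1), ← Real.rpow_mul (abs_nonneg _)]
      have : ((a-1 : ℕ) : ℝ) * p = (a : ℕ) := by
        rw [Nat.cast_sub (by omega : 1 ≤ a), hp]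
        push_cast
        field_simp
      rw [this, Real.rpow_natCast]
    have key2 : S ^ p ≤ M := by
      have e1 : S = ∑ i : Fin n, (1/(n:ℝ)) * |d i| ^ (a-1) := by
        rw [hS, Finset.mul_sum]
      have e2 : M = ∑ i : Fin n, (1/(n:ℝ)) * ((|d i| ^ (a-1) : ℝ)) ^ p := by
        rw [hM, Finset.mul_sum]
        exact Finset.sum_congr rfl fun i _ => by rw [hz i]
      rw [e1, e2]
      exact key
    have := Real.rpow_le_rpow (by positivity) key2 (by positivity :
      (0:ℝ) ≤ ((a:ℝ)-1)/(a:ℝ))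
    rwa [← Real.rpow_mul hS0, show p * (((a:ℝ)-1)/(a:ℝ)) = 1 by
      rw [hp]; field_simp, Real.rpow_one] at this
  -- combine
  have hrpow : M ^ (((a:ℝ)-1)/(a:ℝ)) * M ^ ((1:ℝ)/(a:ℝ)) = M := by
    rw [← Real.rpow_add' hM0 (by field_simp; rw [sub_add_cancel, div_self ha0]; norm_num : (((a:ℝ)-1)/(a:ℝ)) + ((1:ℝ)/(a:ℝ)) ≠ 0)]
    rw [show (((a:ℝ)-1)/(a:ℝ)) + ((1:ℝ)/(a:ℝ)) = 1 by field_simp; ring, Real.rpow_one]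
  have hsplit : (1/(n:ℝ)) * ∑ i, ((a:ℝ) * |d i| ^ (a-2) * (d i) / a) * (d i + yv i)
      = M + (1/(n:ℝ)) * ∑ i, (|d i| ^ (a-2) * d i) * yv i := by
    rw [hM, ← mul_add, ← Finset.sum_add_distrib]
    congr 1
    exact Finset.sum_congr rfl fun i _ => hc i
  rw [hsplit]
  have hCS : Cy * S ≤ Cy * M ^ (((a:ℝ)-1)/(a:ℝ)) := mul_le_mul_of_nonneg_left h2 hCy
  nlinarith [h1, hCS, hrpow]



/-- Power-type loss extension: with `ℓ(f,g) = |f−g|^a/a`, `a ≥ 2`, the per-block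
Euler identity yields
`−2⟨Θ^(l), ∂Lₙ/∂Θ^(l)⟩ ≤ 2 (a Lₙ)^{(a−1)/a} (C_y − (a Lₙ)^{1/a})`. -/
theorem stmt_16 (Lnum : ℕ) (q : Fin (Lnum + 1) → ℕ) (n : ℕ) (hn : 0 < n)
    (a : ℕ) (ha : 2 ≤ a)
    (f : Fin n → PiLp 2 (fun l : Fin (Lnum + 1) => EuclideanSpace ℝ (Fin (q l))) → ℝ)
    (hf : ∀ i, Differentiable ℝ (f i))
    (y : Fin n → ℝ) (Cy : ℝ) (hy : ∀ i, |y i| ≤ Cy)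
    (Ln : PiLp 2 (fun l : Fin (Lnum + 1) => EuclideanSpace ℝ (Fin (q l))) → ℝ)
    (hLn : ∀ Θ', Ln Θ' = (1 / (n : ℝ)) * ∑ i, |f i Θ' - y i| ^ a / (a : ℝ))
    (heuler : ∀ i,
      ∀ Θ' : PiLp 2 (fun l : Fin (Lnum + 1) => EuclideanSpace ℝ (Fin (q l))),
      ∀ l : Fin (Lnum + 1),
        ⟪Θ' l, gradient (fun v => f i (WithLp.toLp 2 (Function.update Θ' l v))) (Θ' l)⟫ = f i Θ')
    (Θ : PiLp 2 (fun l : Fin (Lnum + 1) => EuclideanSpace ℝ (Fin (q l))))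
    (l : Fin (Lnum + 1)) :
    -2 * ⟪Θ l, gradient (fun v => Ln (WithLp.toLp 2 (Function.update Θ l v))) (Θ l)⟫ ≤
      2 * ((a : ℝ) * Ln Θ) ^ (((a : ℝ) - 1) / (a : ℝ)) *
        (Cy - ((a : ℝ) * Ln Θ) ^ ((1 : ℝ) / (a : ℝ))) := by
  have ha0 : (a:ℝ) ≠ 0 := by positivity
  have hupd : WithLp.toLp 2 (Function.update Θ l (Θ l)) = Θ := by
    rw [Function.update_eq_self, WithLp.toLp_ofLp]
  have hU := ((PiLp.continuousLinearEquiv 2 ℝ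
      (fun l : Fin (Lnum+1) => EuclideanSpace ℝ (Fin (q l)))).symm.toContinuousLinearMap.hasFDerivAt
      (x := Function.update (fun i => Θ i) l (Θ l))).comp (Θ l)
      (hasFDerivAt_update (fun i => Θ i) (Θ l))
  set U : EuclideanSpace ℝ (Fin (q l)) →L[ℝ]
      PiLp 2 (fun l : Fin (Lnum + 1) => EuclideanSpace ℝ (Fin (q l))) :=
    ((PiLp.continuousLinearEquiv 2 ℝ
      (fun l : Fin (Lnum+1) => EuclideanSpace ℝ (Fin (q l)))).symm.toContinuousLinearMap).comp
      (ContinuousLinearMap.pi (Pi.single l (ContinuousLinearMap.id ℝ _))) with hUdef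
  set D : Fin n → (EuclideanSpace ℝ (Fin (q l)) →L[ℝ] ℝ) :=
    fun i => (fderiv ℝ (f i) Θ).comp U with hDdef
  have hD : ∀ i, HasFDerivAt (fun v => f i (WithLp.toLp 2 (Function.update Θ l v))) (D i) (Θ l) := by
    intro i
    have h := (hf i (WithLp.toLp 2 (Function.update Θ l (Θ l)))).hasFDerivAt.comp (Θ l) hU
    rw [hupd] at h
    exact h
  have hDval : ∀ i, D i (Θ l) = f i Θ := by
    intro i
    have he := heuler i Θ l
    have hg : gradient (fun v => f i (WithLp.toLp 2 (Function.update Θ l v))) (Θ l)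
        = (InnerProductSpace.toDual ℝ _).symm (D i) := by
      rw [gradient, (hD i).fderiv]
    rw [hg, real_inner_comm, InnerProductSpace.toDual_symm_apply] at he
    exact he
  set c : Fin n → ℝ :=
    fun i => ((a:ℝ) * |f i Θ - y i| ^ (a-2) * (f i Θ - y i) * 1) / (a:ℝ) with hcdef
  have hterm : ∀ i, HasFDerivAt
      (fun v => |f i (WithLp.toLp 2 (Function.update Θ l v)) - y i| ^ a / (a:ℝ)) (c i • D i) (Θ l) := by
    intro i
    have h1 : HasDerivAt (fun t : ℝ => |t - y i| ^ a / (a:ℝ)) (c i) (f i Θ) := by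
      have h0 := (hasDerivAt_abs_pow ha (f i Θ - y i)).comp (f i Θ)
        ((hasDerivAt_id' (x := f i Θ)).sub_const (y i))
      exact h0.div_const (a:ℝ)
    rw [← hupd] at h1
    exact h1.comp_hasFDerivAt (Θ l) (hD i)
  have hGfun : (fun v => Ln (WithLp.toLp 2 (Function.update Θ l v)))
      = fun v => (1/(n:ℝ)) * ∑ i, |f i (WithLp.toLp 2 (Function.update Θ l v)) - y i| ^ a / (a:ℝ) :=
    funext fun v => hLn _
  have hG : HasFDerivAt (fun v => Ln (WithLp.toLp 2 (Function.update Θ l v)))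
      ((1/(n:ℝ)) • ∑ i, c i • D i) (Θ l) := by
    rw [hGfun]
    exact (HasFDerivAt.fun_sum (fun i _ => hterm i)).const_mul _
  have hgrad : ⟪Θ l, gradient (fun v => Ln (WithLp.toLp 2 (Function.update Θ l v))) (Θ l)⟫
      = (1/(n:ℝ)) * ∑ i, c i * f i Θ := by
    rw [real_inner_comm, gradient, hG.fderiv, InnerProductSpace.toDual_symm_apply]
    simp only [ContinuousLinearMap.smul_apply, ContinuousLinearMap.sum_apply, smul_eq_mul]
    congr 1
    exact Finset.sum_congr rfl fun i _ => by rw [hDval i]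
  rw [hgrad]
  have hMeq : (a:ℝ) * Ln Θ = (1/(n:ℝ)) * ∑ i, |f i Θ - y i| ^ a := by
    rw [hLn Θ, ← Finset.sum_div]
    field_simp
  have key := final_ineq n hn a ha (fun i => f i Θ - y i) y Cy hy ((a:ℝ) * Ln Θ) hMeq
  have hsum : ∑ i, c i * f i Θ
      = ∑ i, ((a:ℝ) * |f i Θ - y i| ^ (a-2) * (f i Θ - y i) / (a:ℝ))
          * ((f i Θ - y i) + y i) := by
    refine Finset.sum_congr rfl fun i _ => ?_
    simp only [hcdef, mul_one, sub_add_cancel]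
  rw [hsum]
  exact key
end
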